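/- Fix: positive integers K and L; a nonempty finite collection I of nonempty subsets of {1,...,K}; for each S ∈ I a positive integer n_S; reals 0 < D_1 < D_2 < ... < D_L; for each k ∈ {1,...,K} an integer r_k ∈ {1,...,L}; positive reals B, T, n₀; a nonempty finite set Ω with q : Ω → ℝ satisfying q(ω) ≥ 0 for all ω and Σ_{ω∈Ω} q(ω) = 1; and for each ω ∈ Ω and k ∈ {1,...,K} a positive real h_k(ω). Let φ(t,u) := t·log₂(1 + u/t) for t > 0 and φ(0,u) := 0. Let C be the set of real families (t,e) = ((t_{ω,S,l}),(e_{ω,S,l})) with t_{ω,S,l} ≥ 0, Σ_{S∈I} Σ_{l=1}^L t_{ω,S,l} ≤ T for every ω, and e_{ω,S,l} ≥ 0; let g_{S,k}(t,e) := n_S·D_{r_k} − (B/T) Σ_{ω∈Ω} q(ω)·φ(t_{ω,S,r_k}, e_{ω,S,r_k}·h_k(ω)/n₀) for S ∈ I, k ∈ S; let Ẽ(t,e) := Σ_{ω∈Ω} q(ω) Σ_{S∈I} Σ_{l=1}^L e_{ω,S,l}; and for λ = (λ_{S,k})_{S∈I,k∈S} with λ_{S,k} ≥ 0 define the dual function D(λ)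 := inf_{(t,e)∈C} [ Ẽ(t,e) + Σ_{S∈I} Σ_{k∈S} λ_{S,k}·g_{S,k}(t,e) ]. Assume there exists (t⁰,e⁰) ∈ C with g_{S,k}(t⁰,e⁰) < 0 for all S ∈ I and k ∈ S (Slater's condition). Then sup{ D(λ) : λ_{S,k} ≥ 0 for all S ∈ I, k ∈ S } = inf{ Ẽ(t,e) : (t,e) ∈ C, g_{S,k}(t,e) ≤ 0 for all S ∈ I, k ∈ S }; i.e., the duality gap of the partial dual problem is zero. -/

import Mathlib

lemma aux_lin_ub {X y Y : ℝ} (h : ∀ M : ℝ, 0 ≤ M → X + M * y < Y) : y ≤ 0 := by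
  by_contra hy
  push_neg at hy
  have h2 := h (max 0 ((Y - X) / y)) (le_max_left _ _)
  have h3 : (Y - X) / y * y ≤ max 0 ((Y - X) / y) * y :=
    mul_le_mul_of_nonneg_right (le_max_right _ _) hy.le
  rw [div_mul_cancel₀ _ (ne_of_gt hy)] at h3
  linarith

lemma aux_eps_le {X y Y : ℝ} (h : ∀ ε : ℝ, 0 < ε → X + ε * y < Y) : X ≤ Y := by
  by_contra hXY
  push_neg at hXY
  rcases le_or_gt 0 y with hy | hy
  · have h1 := h 1 one_pos; nlinarith
  · have hεpos : 0 < (Y - X) / 2 / y := by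
      apply div_pos_of_neg_of_neg (by linarith) hy
    have h1 := h _ hεpos
    rw [div_mul_cancel₀ _ (ne_of_lt hy)] at h1
    linarith

lemma phi_concave {t₁ t₂ u₁ u₂ a b : ℝ}
    (ht₁ : 0 ≤ t₁) (ht₂ : 0 ≤ t₂) (hu₁ : 0 ≤ u₁) (hu₂ : 0 ≤ u₂)
    (ha : 0 ≤ a) (hb : 0 ≤ b) (hab : a + b = 1)
    (φ : ℝ → ℝ → ℝ)
    (hφ : ∀ t u : ℝ, φ t u = if 0 < t then t * Real.logb 2 (1 + u / t) else 0) :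
    a * φ t₁ u₁ + b * φ t₂ u₂ ≤ φ (a * t₁ + b * t₂) (a * u₁ + b * u₂) := by
  rcases eq_or_lt_of_le ha with h0 | ha'
  · have hb1 : b = 1 := by linarith
    simp [← h0, hb1]
  rcases eq_or_lt_of_le hb with h0 | hb'
  · have ha1 : a = 1 := by linarith
    simp [← h0, ha1]
  rcases eq_or_lt_of_le ht₁ with h1 | h1
  · subst h1
    rcases eq_or_lt_of_le ht₂ with h2 | h2
    · subst h2
      simp [hφ]
    · have hbt2 : 0 < b * t₂ := by positivity
      rw [show a * (0:ℝ) + b * t₂ = b * t₂ by ring]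
      have hxpos : (0:ℝ) < 1 + u₂ / t₂ := by positivity
      have hle : 1 + u₂ / t₂ ≤ 1 + (a * u₁ + b * u₂) / (b * t₂) := by
        have : u₂ / t₂ ≤ (a * u₁ + b * u₂) / (b * t₂) := by
          rw [div_le_div_iff₀ h2 hbt2]
          nlinarith [mul_nonneg (mul_nonneg ha hu₁) ht₂]
        linarith
      have hlog := Real.logb_le_logb_of_le (by norm_num : (1:ℝ) < 2) hxpos hle
      rw [hφ, hφ, hφ, if_neg (lt_irrefl 0), if_pos h2, if_pos hbt2]
      calc a * 0 + b * (t₂ * Real.logb 2 (1 + u₂ / t₂))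
          = (b * t₂) * Real.logb 2 (1 + u₂ / t₂) := by ring
        _ ≤ (b * t₂) * Real.logb 2 (1 + (a * u₁ + b * u₂) / (b * t₂)) :=
            mul_le_mul_of_nonneg_left hlog hbt2.le
  rcases eq_or_lt_of_le ht₂ with h2 | h2
  · subst h2
    have hat1 : 0 < a * t₁ := by positivity
    rw [show a * t₁ + b * (0:ℝ) = a * t₁ by ring]
    have hxpos : (0:ℝ) < 1 + u₁ / t₁ := by positivity
    have hle : 1 + u₁ / t₁ ≤ 1 + (a * u₁ + b * u₂) / (a * t₁) := by
      have : u₁ / t₁ ≤ (a * u₁ + b * u₂) / (a * t₁) := by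
        rw [div_le_div_iff₀ h1 hat1]
        nlinarith [mul_nonneg (mul_nonneg hb hu₂) ht₁]
      linarith
    have hlog := Real.logb_le_logb_of_le (by norm_num : (1:ℝ) < 2) hxpos hle
    rw [hφ, hφ, hφ, if_neg (lt_irrefl 0), if_pos h1, if_pos hat1]
    calc a * (t₁ * Real.logb 2 (1 + u₁ / t₁)) + b * 0
        = (a * t₁) * Real.logb 2 (1 + u₁ / t₁) := by ring
      _ ≤ (a * t₁) * Real.logb 2 (1 + (a * u₁ + b * u₂) / (a * t₁)) :=
          mul_le_mul_of_nonneg_left hlog hat1.le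
  · -- main case: both positive
    set t := a * t₁ + b * t₂ with hts
    have htpos : 0 < t := by positivity
    have htne : t ≠ 0 := htpos.ne'
    set x₁ := 1 + u₁ / t₁ with hx₁
    set x₂ := 1 + u₂ / t₂ with hx₂
    have hx₁pos : 0 < x₁ := by positivity
    have hx₂pos : 0 < x₂ := by positivity
    have hw₁ : 0 ≤ a * t₁ / t := by positivity
    have hw₂ : 0 ≤ b * t₂ / t := by positivity
    have hwsum : a * t₁ / t + b * t₂ / t = 1 := by field_simp; exact hts.symm
    have hJ := (strictConcaveOn_log_Ioi.concaveOn).2 (Set.mem_Ioi.mpr hx₁pos)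
      (Set.mem_Ioi.mpr hx₂pos) hw₁ hw₂ hwsum
    simp only [smul_eq_mul] at hJ
    have hcomb : a * t₁ / t * x₁ + b * t₂ / t * x₂ = 1 + (a * u₁ + b * u₂) / t := by
      rw [hx₁, hx₂]
      field_simp
      ring
    rw [hcomb] at hJ
    have key : a * t₁ * Real.log x₁ + b * t₂ * Real.log x₂
        ≤ t * Real.log (1 + (a * u₁ + b * u₂) / t) := by
      have := mul_le_mul_of_nonneg_left hJ htpos.le
      calc a * t₁ * Real.log x₁ + b * t₂ * Real.log x₂
          = t * (a * t₁ / t * Real.log x₁ + b * t₂ / t * Real.log x₂) := by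
            field_simp
        _ ≤ t * Real.log (1 + (a * u₁ + b * u₂) / t) := this
    have hc : (0:ℝ) ≤ (Real.log 2)⁻¹ := by positivity
    rw [hφ, hφ, hφ, if_pos h1, if_pos h2, if_pos htpos]
    calc a * (t₁ * Real.logb 2 x₁) + b * (t₂ * Real.logb 2 x₂)
        = (a * t₁ * Real.log x₁ + b * t₂ * Real.log x₂) * (Real.log 2)⁻¹ := by
          simp only [Real.logb, div_eq_mul_inv]; ring
      _ ≤ (t * Real.log (1 + (a * u₁ + b * u₂) / t)) * (Real.log 2)⁻¹ :=
          mul_le_mul_of_nonneg_right key hc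
      _ = t * Real.logb 2 (1 + (a * u₁ + b * u₂) / t) := by
          simp only [Real.logb, div_eq_mul_inv]; ring


set_option maxHeartbeats 4000000 in
set_option synthInstance.maxHeartbeats 400000 in
/-- zero duality gap under Slater's condition: with `C` the set of
time/energy allocations satisfying the separable constraints, `g S k` the relaxed
successful-transmission constraint functions, `Ẽ` the average energy objective, and
`D λ` the partial Lagrange dual function, if Slater's condition holds then
`sup {D λ : λ ≥ 0} = inf {Ẽ(t,e) : (t,e) ∈ C, g ≤ 0}`. -/
theorem stmt5 (K L : ℕ) (hK : 0 < K) (hL : 0 < L)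
    (I : Finset (Finset (Fin K))) (hI : I.Nonempty) (hIne : ∀ S ∈ I, S.Nonempty)
    (n : Finset (Fin K) → ℕ) (hn : ∀ S ∈ I, 0 < n S)
    (D : ℕ → ℝ) (hD1 : 0 < D 1)
    (hD : ∀ l m : ℕ, 1 ≤ l → l < m → m ≤ L → D l < D m)
    (r : Fin K → ℕ) (hr : ∀ k, r k ∈ Finset.Icc 1 L)
    (B T n₀ : ℝ) (hB : 0 < B) (hT : 0 < T) (hn₀ : 0 < n₀)
    (Ω : Type) [Fintype Ω] [Nonempty Ω]
    (q : Ω → ℝ) (hq : ∀ ω, 0 ≤ q ω) (hq1 : ∑ ω, q ω = 1)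
    (h : Ω → Fin K → ℝ) (hh : ∀ ω k, 0 < h ω k)
    (φ : ℝ → ℝ → ℝ)
    (hφ : ∀ t u : ℝ, φ t u = if 0 < t then t * Real.logb 2 (1 + u / t) else 0)
    (C : Set ((Ω → Finset (Fin K) → ℕ → ℝ) × (Ω → Finset (Fin K) → ℕ → ℝ)))
    (hC : C = {te | (∀ ω S l, 0 ≤ te.1 ω S l) ∧
        (∀ ω, ∑ S ∈ I, ∑ l ∈ Finset.Icc 1 L, te.1 ω S l ≤ T) ∧
        (∀ ω S l, 0 ≤ te.2 ω S l)})
    (g : Finset (Fin K) → Fin K →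
        ((Ω → Finset (Fin K) → ℕ → ℝ) × (Ω → Finset (Fin K) → ℕ → ℝ)) → ℝ)
    (hg : ∀ S k te, g S k te = (n S : ℝ) * D (r k) -
        (B / T) * ∑ ω, q ω * φ (te.1 ω S (r k)) (te.2 ω S (r k) * h ω k / n₀))
    (Etil : ((Ω → Finset (Fin K) → ℕ → ℝ) × (Ω → Finset (Fin K) → ℕ → ℝ)) → ℝ)
    (hEtil : ∀ te, Etil te = ∑ ω, q ω * ∑ S ∈ I, ∑ l ∈ Finset.Icc 1 L, te.2 ω S l)
    (Dual : (Finset (Fin K) → Fin K → ℝ) → ℝ)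
    (hDual : ∀ lam : Finset (Fin K) → Fin K → ℝ,
      Dual lam = sInf ((fun te => Etil te + ∑ S ∈ I, ∑ k ∈ S, lam S k * g S k te) '' C))
    (slater : ∃ te ∈ C, ∀ S ∈ I, ∀ k ∈ S, g S k te < 0) :
    sSup {d : ℝ | ∃ lam : Finset (Fin K) → Fin K → ℝ,
        (∀ S ∈ I, ∀ k ∈ S, 0 ≤ lam S k) ∧ d = Dual lam} =
    sInf {v : ℝ | ∃ te ∈ C, (∀ S ∈ I, ∀ k ∈ S, g S k te ≤ 0) ∧ v = Etil te} := by
  classical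
  obtain ⟨te0, hte0C, hte0⟩ := slater
  set Sp : Set ℝ := {v : ℝ | ∃ te ∈ C, (∀ S ∈ I, ∀ k ∈ S, g S k te ≤ 0) ∧ v = Etil te}
    with hSp
  set pstar : ℝ := sInf Sp with hpstar
  -- basic facts about C members
  have hCmem : ∀ te ∈ C, (∀ ω S l, 0 ≤ te.1 ω S l) ∧
      (∀ ω, ∑ S ∈ I, ∑ l ∈ Finset.Icc 1 L, te.1 ω S l ≤ T) ∧
      (∀ ω S l, 0 ≤ te.2 ω S l) := by
    intro te hte; rwa [hC] at hte
  have hEtil_nonneg : ∀ te ∈ C, 0 ≤ Etil te := by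
    intro te hte
    obtain ⟨-, -, he⟩ := hCmem te hte
    rw [hEtil]
    refine Finset.sum_nonneg fun ω _ => mul_nonneg (hq ω) ?_
    exact Finset.sum_nonneg fun S _ => Finset.sum_nonneg fun l _ => he ω S l
  have hSp_ne : Sp.Nonempty :=
    ⟨Etil te0, te0, hte0C, fun S hS k hk => (hte0 S hS k hk).le, rfl⟩
  have hSp_lb : ∀ v ∈ Sp, (0:ℝ) ≤ v := by
    rintro v ⟨te, hte, -, rfl⟩; exact hEtil_nonneg te hte
  have hpstar_nonneg : 0 ≤ pstar := le_csInf hSp_ne hSp_lb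
  have hpstar_le : ∀ te ∈ C, (∀ S ∈ I, ∀ k ∈ S, g S k te ≤ 0) → pstar ≤ Etil te := by
    intro te hte hfeas
    exact csInf_le ⟨0, hSp_lb⟩ ⟨te, hte, hfeas, rfl⟩
  -- convex combination of two allocations
  have hcmb : ∀ (a b : ℝ) (x y : (Ω → Finset (Fin K) → ℕ → ℝ) × (Ω → Finset (Fin K) → ℕ → ℝ)), 0 ≤ a → 0 ≤ b → a + b = 1 → x ∈ C → y ∈ C →
      ((fun ω S l => a * x.1 ω S l + b * y.1 ω S l,
        fun ω S l => a * x.2 ω S l + b * y.2 ω S l) ) ∈ C := by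
    intro a b x y ha hb hab hx hy
    obtain ⟨hx1, hx2, hx3⟩ := hCmem x hx
    obtain ⟨hy1, hy2, hy3⟩ := hCmem y hy
    rw [hC]
    refine ⟨fun ω S l => add_nonneg (mul_nonneg ha (hx1 ω S l)) (mul_nonneg hb (hy1 ω S l)),
      fun ω => ?_,
      fun ω S l => add_nonneg (mul_nonneg ha (hx3 ω S l)) (mul_nonneg hb (hy3 ω S l))⟩
    have e1 : ∑ S ∈ I, ∑ l ∈ Finset.Icc 1 L, (a * x.1 ω S l + b * y.1 ω S l)
        = a * (∑ S ∈ I, ∑ l ∈ Finset.Icc 1 L, x.1 ω S l)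
          + b * (∑ S ∈ I, ∑ l ∈ Finset.Icc 1 L, y.1 ω S l) := by
      rw [Finset.mul_sum, Finset.mul_sum, ← Finset.sum_add_distrib]
      refine Finset.sum_congr rfl fun S _ => ?_
      rw [Finset.mul_sum, Finset.mul_sum, ← Finset.sum_add_distrib]
    rw [e1]
    nlinarith [hx2 ω, hy2 ω, mul_le_mul_of_nonneg_left (hx2 ω) ha,
      mul_le_mul_of_nonneg_left (hy2 ω) hb]
  -- Etil is affine on combinations
  have hEtil_aff : ∀ (a b : ℝ) (x y : (Ω → Finset (Fin K) → ℕ → ℝ) × (Ω → Finset (Fin K) → ℕ → ℝ)),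
      Etil ((fun ω S l => a * x.1 ω S l + b * y.1 ω S l,
        fun ω S l => a * x.2 ω S l + b * y.2 ω S l) )
      = a * Etil x + b * Etil y := by
    intro a b x y
    rw [hEtil, hEtil, hEtil, Finset.mul_sum, Finset.mul_sum, ← Finset.sum_add_distrib]
    refine Finset.sum_congr rfl fun ω _ => ?_
    have e1 : ∑ S ∈ I, ∑ l ∈ Finset.Icc 1 L, (a * x.2 ω S l + b * y.2 ω S l)
        = a * (∑ S ∈ I, ∑ l ∈ Finset.Icc 1 L, x.2 ω S l)
          + b * (∑ S ∈ I, ∑ l ∈ Finset.Icc 1 L, y.2 ω S l) := by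
      rw [Finset.mul_sum, Finset.mul_sum, ← Finset.sum_add_distrib]
      refine Finset.sum_congr rfl fun S _ => ?_
      rw [Finset.mul_sum, Finset.mul_sum, ← Finset.sum_add_distrib]
    rw [e1]; ring
  -- g is convex on C
  have hg_conv : ∀ (a b : ℝ) (x y : (Ω → Finset (Fin K) → ℕ → ℝ) × (Ω → Finset (Fin K) → ℕ → ℝ)), 0 ≤ a → 0 ≤ b → a + b = 1 → x ∈ C → y ∈ C →
      ∀ S k, g S k ((fun ω S l => a * x.1 ω S l + b * y.1 ω S l,
        fun ω S l => a * x.2 ω S l + b * y.2 ω S l) )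
        ≤ a * g S k x + b * g S k y := by
    intro a b x y ha hb hab hx hy S k
    obtain ⟨hx1, hx2, hx3⟩ := hCmem x hx
    obtain ⟨hy1, hy2, hy3⟩ := hCmem y hy
    rw [hg, hg, hg]
    have hBT : (0:ℝ) ≤ B / T := le_of_lt (div_pos hB hT)
    have hterm : ∀ ω : Ω,
        a * (q ω * φ (x.1 ω S (r k)) (x.2 ω S (r k) * h ω k / n₀))
        + b * (q ω * φ (y.1 ω S (r k)) (y.2 ω S (r k) * h ω k / n₀))
        ≤ q ω * φ (a * x.1 ω S (r k) + b * y.1 ω S (r k))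
            ((a * x.2 ω S (r k) + b * y.2 ω S (r k)) * h ω k / n₀) := by
      intro ω
      have harg : (a * x.2 ω S (r k) + b * y.2 ω S (r k)) * h ω k / n₀
          = a * (x.2 ω S (r k) * h ω k / n₀) + b * (y.2 ω S (r k) * h ω k / n₀) := by
        field_simp
      rw [harg]
      have hu1 : 0 ≤ x.2 ω S (r k) * h ω k / n₀ :=
        div_nonneg (mul_nonneg (hx3 ω S (r k)) (hh ω k).le) hn₀.le
      have hu2 : 0 ≤ y.2 ω S (r k) * h ω k / n₀ :=
        div_nonneg (mul_nonneg (hy3 ω S (r k)) (hh ω k).le) hn₀.le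
      have hph := phi_concave (hx1 ω S (r k)) (hy1 ω S (r k)) hu1 hu2 ha hb hab φ hφ
      calc a * (q ω * φ (x.1 ω S (r k)) (x.2 ω S (r k) * h ω k / n₀))
          + b * (q ω * φ (y.1 ω S (r k)) (y.2 ω S (r k) * h ω k / n₀))
          = q ω * (a * φ (x.1 ω S (r k)) (x.2 ω S (r k) * h ω k / n₀)
            + b * φ (y.1 ω S (r k)) (y.2 ω S (r k) * h ω k / n₀)) := by ring
        _ ≤ q ω * φ (a * x.1 ω S (r k) + b * y.1 ω S (r k))
            (a * (x.2 ω S (r k) * h ω k / n₀) + b * (y.2 ω S (r k) * h ω k / n₀)) :=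
            mul_le_mul_of_nonneg_left hph (hq ω)
    have hsum : a * (∑ ω, q ω * φ (x.1 ω S (r k)) (x.2 ω S (r k) * h ω k / n₀))
        + b * (∑ ω, q ω * φ (y.1 ω S (r k)) (y.2 ω S (r k) * h ω k / n₀))
        ≤ ∑ ω, q ω * φ (a * x.1 ω S (r k) + b * y.1 ω S (r k))
            ((a * x.2 ω S (r k) + b * y.2 ω S (r k)) * h ω k / n₀) := by
      rw [Finset.mul_sum, Finset.mul_sum, ← Finset.sum_add_distrib]
      exact Finset.sum_le_sum fun ω _ => hterm ω
    have hm := mul_le_mul_of_nonneg_left hsum hBT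
    have e3 : ∀ P c s1 s2 : ℝ, a * (P - c * s1) + b * (P - c * s2)
        = P - c * (a * s1 + b * s2) := by
      intro P c s1 s2; linear_combination P * hab
    rw [e3]
    linarith [hm]
  -- The separating-hyperplane space
  set A : Set (((Finset (Fin K) × Fin K) → ℝ) × ℝ) :=
    {x | ∃ te ∈ C, (∀ S ∈ I, ∀ k ∈ S, g S k te < x.1 (S, k)) ∧ Etil te < x.2} with hA
  have hAconv : Convex ℝ A := by
    rintro x ⟨tex, htex, hgx, hEx⟩ y ⟨tey, htey, hgy, hEy⟩ a b ha hb hab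
    refine ⟨(fun ω S l => a * tex.1 ω S l + b * tey.1 ω S l,
      fun ω S l => a * tex.2 ω S l + b * tey.2 ω S l),
      hcmb a b tex tey ha hb hab htex htey, fun S hS k hk => ?_, ?_⟩
    · have h1 := hg_conv a b tex tey ha hb hab htex htey S k
      have h2 : a * g S k tex + b * g S k tey < a * x.1 (S, k) + b * y.1 (S, k) := by
        rcases eq_or_lt_of_le ha with h0 | h0
        · have hb1 : b = 1 := by linarith
          rw [← h0, hb1]
          simpa using hgy S hS k hk
        · have h3 := mul_lt_mul_of_pos_left (hgx S hS k hk) h0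
          have h4 := mul_le_mul_of_nonneg_left (hgy S hS k hk).le hb
          linarith
      have h5 : (a • x + b • y).1 (S, k) = a * x.1 (S, k) + b * y.1 (S, k) := by
        simp [Prod.smul_fst]
      rw [h5]
      exact lt_of_le_of_lt h1 h2
    · have h1 := hEtil_aff a b tex tey
      have h5 : (a • x + b • y).2 = a * x.2 + b * y.2 := by simp [Prod.smul_snd]
      rw [h5, h1]
      rcases eq_or_lt_of_le ha with h0 | h0
      · have hb1 : b = 1 := by linarith
        rw [← h0, hb1]
        simpa using hEy
      · have h3 := mul_lt_mul_of_pos_left hEx h0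
        have h4 := mul_le_mul_of_nonneg_left hEy.le hb
        linarith
  have hAopen : IsOpen A := by
    have hrepr : A = ⋃ te ∈ C,
        ((⋂ S ∈ I, ⋂ k ∈ S, {x : ((Finset (Fin K) × Fin K) → ℝ) × ℝ | g S k te < x.1 (S, k)})
          ∩ {x : ((Finset (Fin K) × Fin K) → ℝ) × ℝ | Etil te < x.2}) := by
      ext x
      simp only [hA, Set.mem_setOf_eq, Set.mem_iUnion, Set.mem_inter_iff, Set.mem_iInter]
      tauto
    rw [hrepr]
    refine isOpen_biUnion fun te _ => IsOpen.inter ?_ (isOpen_lt continuous_const continuous_snd)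
    refine isOpen_biInter_finset fun S hS => isOpen_biInter_finset fun k hk => ?_
    exact isOpen_lt continuous_const ((continuous_apply (S, k)).comp continuous_fst)
  have hxA : (((0 : (Finset (Fin K) × Fin K) → ℝ), pstar) :
      ((Finset (Fin K) × Fin K) → ℝ) × ℝ) ∉ A := by
    rintro ⟨te, hte, hglt, hElt⟩
    have h1 := hpstar_le te hte (fun S hS k hk => (hglt S hS k hk).le)
    simp only at hElt
    linarith
  obtain ⟨f, hf⟩ := geometric_hahn_banach_open_point hAconv hAopen hxA
  set c : Finset (Fin K) × Fin K → ℝ :=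
    fun p => f ((Pi.single p 1 : (Finset (Fin K) × Fin K) → ℝ), (0 : ℝ)) with hcdef
  set μ : ℝ := f ((0 : (Finset (Fin K) × Fin K) → ℝ), (1 : ℝ)) with hμdef
  have hfeq : ∀ (u : (Finset (Fin K) × Fin K) → ℝ) (v : ℝ),
      f (u, v) = (∑ p, u p * c p) + v * μ := by
    intro u v
    have hd : ((u, v) : ((Finset (Fin K) × Fin K) → ℝ) × ℝ)
        = (∑ p : Finset (Fin K) × Fin K,
            u p • (((Pi.single p 1 : (Finset (Fin K) × Fin K) → ℝ), (0 : ℝ)) :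
              ((Finset (Fin K) × Fin K) → ℝ) × ℝ))
          + v • (((0 : (Finset (Fin K) × Fin K) → ℝ), (1 : ℝ)) :
              ((Finset (Fin K) × Fin K) → ℝ) × ℝ) := by
      refine Prod.ext ?_ ?_
      · simp only [Prod.fst_add, Prod.fst_sum, Prod.smul_fst, Pi.smul_apply, smul_eq_mul]
        funext j
        simp [Finset.sum_apply, Pi.single_apply, mul_ite]
      · simp [Prod.snd_sum]
    rw [hd, map_add, map_sum]
    simp only [map_smul, smul_eq_mul]
    rfl
  have hf' : ∀ x ∈ A, (∑ p, x.1 p * c p) + x.2 * μ < pstar * μ := by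
    intro x hx
    have h1 := hf x hx
    rw [show x = (x.1, x.2) from rfl, hfeq x.1 x.2, hfeq 0 pstar] at h1
    simpa using h1

  -- base point and sign facts
  have hbmem : ∀ (M : ℝ), 0 ≤ M →
      (((fun p : Finset (Fin K) × Fin K =>
          if p.1 ∈ I ∧ p.2 ∈ p.1 then g p.1 p.2 te0 + 1 else 0), Etil te0 + 1 + M) :
        ((Finset (Fin K) × Fin K) → ℝ) × ℝ) ∈ A := by
    intro M hM
    refine ⟨te0, hte0C, fun S hS k hk => ?_, by simp only; linarith⟩
    show g S k te0 < if S ∈ I ∧ k ∈ S then g S k te0 + 1 else 0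
    rw [if_pos ⟨hS, hk⟩]; linarith
  have hsingle : ∀ (p : Finset (Fin K) × Fin K) (M : ℝ)
      (u : (Finset (Fin K) × Fin K) → ℝ),
      ∑ q', (u + M • (Pi.single p 1 : (Finset (Fin K) × Fin K) → ℝ)) q' * c q' = (∑ q', u q' * c q') + M * c p := by
    intro p M u
    simp only [Pi.add_apply, Pi.smul_apply, smul_eq_mul, add_mul]
    rw [Finset.sum_add_distrib]
    congr 1
    have e : ∀ q' : Finset (Fin K) × Fin K, M * (Pi.single p 1 : (Finset (Fin K) × Fin K) → ℝ) q' * c q'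
        = if q' = p then M * c p else 0 := by
      intro q'
      rcases eq_or_ne q' p with rfl | hne
      · simp
      · simp [Pi.single_apply, hne]
    rw [Finset.sum_congr rfl fun q' _ => e q']
    simp
  have hμle : μ ≤ 0 := by
    apply aux_lin_ub
      (X := (∑ p, (if p.1 ∈ I ∧ p.2 ∈ p.1 then g p.1 p.2 te0 + 1 else 0) * c p)
        + (Etil te0 + 1) * μ) (Y := pstar * μ)
    intro M hM
    have h1 := hf' _ (hbmem M hM)
    simp only at h1
    have e2 : (Etil te0 + 1 + M) * μ = (Etil te0 + 1) * μ + M * μ := by ring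
    rw [e2] at h1
    linarith
  have hc_act : ∀ p : Finset (Fin K) × Fin K, p.1 ∈ I → p.2 ∈ p.1 → c p ≤ 0 := by
    intro p hp1 hp2
    apply aux_lin_ub
      (X := (∑ p', (if p'.1 ∈ I ∧ p'.2 ∈ p'.1 then g p'.1 p'.2 te0 + 1 else 0) * c p')
        + (Etil te0 + 1) * μ) (Y := pstar * μ)
    intro M hM
    have hmem : ((((fun p' : Finset (Fin K) × Fin K =>
        if p'.1 ∈ I ∧ p'.2 ∈ p'.1 then g p'.1 p'.2 te0 + 1 else 0) + M • (Pi.single p 1 : (Finset (Fin K) × Fin K) → ℝ)),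
        Etil te0 + 1) : ((Finset (Fin K) × Fin K) → ℝ) × ℝ) ∈ A := by
      refine ⟨te0, hte0C, fun S hS k hk => ?_, by simp only; linarith⟩
      show g S k te0 < (if S ∈ I ∧ k ∈ S then g S k te0 + 1 else 0)
        + M * (Pi.single p 1 : (Finset (Fin K) × Fin K) → ℝ) (S, k)
      have hnn : (0:ℝ) ≤ (Pi.single p 1 : (Finset (Fin K) × Fin K) → ℝ) (S, k) := by
        rw [Pi.single_apply]; split <;> norm_num
      rw [if_pos ⟨hS, hk⟩]
      nlinarith [mul_nonneg hM hnn]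
    have h1 := hf' _ hmem
    simp only at h1
    rw [hsingle p M _] at h1
    linarith
  have hc_inact : ∀ p : Finset (Fin K) × Fin K, ¬(p.1 ∈ I ∧ p.2 ∈ p.1) → c p = 0 := by
    intro p hp
    have hboth : ∀ s : ℝ, s = 1 ∨ s = -1 →
        ∀ M : ℝ, 0 ≤ M →
        ((∑ p', (if p'.1 ∈ I ∧ p'.2 ∈ p'.1 then g p'.1 p'.2 te0 + 1 else 0) * c p')
          + (Etil te0 + 1) * μ) + M * (s * c p) < pstar * μ := by
      intro s hs M hM
      have hmem : ((((fun p' : Finset (Fin K) × Fin K =>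
          if p'.1 ∈ I ∧ p'.2 ∈ p'.1 then g p'.1 p'.2 te0 + 1 else 0)
            + (M * s) • (Pi.single p 1 : (Finset (Fin K) × Fin K) → ℝ)),
          Etil te0 + 1) : ((Finset (Fin K) × Fin K) → ℝ) × ℝ) ∈ A := by
        refine ⟨te0, hte0C, fun S hS k hk => ?_, by simp only; linarith⟩
        show g S k te0 < (if S ∈ I ∧ k ∈ S then g S k te0 + 1 else 0)
          + (M * s) * (Pi.single p 1 : (Finset (Fin K) × Fin K) → ℝ) (S, k)
        have hne : (S, k) ≠ p := by
          intro hEq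
          exact hp (hEq ▸ (⟨hS, hk⟩ : (S, k).1 ∈ I ∧ (S, k).2 ∈ (S, k).1))
        rw [if_pos ⟨hS, hk⟩, Pi.single_apply, if_neg hne]
        simp
      have h1 := hf' _ hmem
      simp only at h1
      rw [hsingle p (M * s) _] at h1
      have e2 : M * s * c p = M * (s * c p) := by ring
      linarith [h1, e2]
    have h1 : c p ≤ 0 := by
      have := aux_lin_ub (hboth 1 (Or.inl rfl))
      linarith [this]
    have h2 : -c p ≤ 0 := by
      have := aux_lin_ub (hboth (-1) (Or.inr rfl))
      linarith [this]
    linarith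
  -- the key Lagrangian inequality from separation
  have hkey : ∀ te ∈ C,
      (∑ p ∈ Finset.univ.filter
        (fun p : Finset (Fin K) × Fin K => p.1 ∈ I ∧ p.2 ∈ p.1), g p.1 p.2 te * c p)
      + Etil te * μ ≤ pstar * μ := by
    intro te hte
    apply aux_eps_le (y := (∑ p ∈ Finset.univ.filter
      (fun p : Finset (Fin K) × Fin K => p.1 ∈ I ∧ p.2 ∈ p.1), c p) + μ)
    intro ε hε
    have hmem : (((fun p : Finset (Fin K) × Fin K =>
        if p.1 ∈ I ∧ p.2 ∈ p.1 then g p.1 p.2 te + ε else 0), Etil te + ε) :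
        ((Finset (Fin K) × Fin K) → ℝ) × ℝ) ∈ A := by
      refine ⟨te, hte, fun S hS k hk => ?_, by simp only; linarith⟩
      show g S k te < if S ∈ I ∧ k ∈ S then g S k te + ε else 0
      rw [if_pos ⟨hS, hk⟩]; linarith
    have h1 := hf' _ hmem
    simp only at h1
    have e1 : ∑ p, (if p.1 ∈ I ∧ p.2 ∈ p.1 then g p.1 p.2 te + ε else 0) * c p
        = (∑ p ∈ Finset.univ.filter
            (fun p : Finset (Fin K) × Fin K => p.1 ∈ I ∧ p.2 ∈ p.1), g p.1 p.2 te * c p)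
          + ε * (∑ p ∈ Finset.univ.filter
            (fun p : Finset (Fin K) × Fin K => p.1 ∈ I ∧ p.2 ∈ p.1), c p) := by
      rw [Finset.sum_filter, Finset.sum_filter, Finset.mul_sum, ← Finset.sum_add_distrib]
      refine Finset.sum_congr rfl fun p _ => ?_
      by_cases hp : p.1 ∈ I ∧ p.2 ∈ p.1
      · simp only [if_pos hp]; ring
      · simp only [if_neg hp]; ring
    rw [e1] at h1
    have e2 : (Etil te + ε) * μ = Etil te * μ + ε * μ := by ring
    rw [e2] at h1
    have e3 : ε * (∑ p ∈ Finset.univ.filter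
        (fun p : Finset (Fin K) × Fin K => p.1 ∈ I ∧ p.2 ∈ p.1), c p) + ε * μ
        = ε * ((∑ p ∈ Finset.univ.filter
          (fun p : Finset (Fin K) × Fin K => p.1 ∈ I ∧ p.2 ∈ p.1), c p) + μ) := by ring
    linarith [h1, e3]

  have hμneg : μ < 0 := by
    rcases lt_or_eq_of_le hμle with hlt | heq
    · exact hlt
    exfalso
    have h2 := hkey te0 hte0C
    rw [heq] at h2
    simp only [mul_zero, add_zero] at h2
    have hterms : ∀ p ∈ Finset.univ.filter
        (fun p : Finset (Fin K) × Fin K => p.1 ∈ I ∧ p.2 ∈ p.1),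
        0 ≤ g p.1 p.2 te0 * c p := by
      intro p hp
      obtain ⟨-, hp1, hp2⟩ := Finset.mem_filter.mp hp
      nlinarith [(hte0 p.1 hp1 p.2 hp2).le, hc_act p hp1 hp2]
    have hsum0 := le_antisymm h2 (Finset.sum_nonneg hterms)
    have hallz := (Finset.sum_eq_zero_iff_of_nonneg hterms).mp hsum0
    have hc0 : ∀ p' : Finset (Fin K) × Fin K, c p' = 0 := by
      intro p'
      by_cases hp : p'.1 ∈ I ∧ p'.2 ∈ p'.1
      · have hz := hallz p' (Finset.mem_filter.mpr ⟨Finset.mem_univ _, hp⟩)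
        rcases mul_eq_zero.mp hz with h0 | h0
        · exact absurd h0 (ne_of_lt (hte0 p'.1 hp.1 p'.2 hp.2))
        · exact h0
      · exact hc_inact p' hp
    have h3 := hf' _ (hbmem 0 le_rfl)
    simp only at h3
    rw [heq] at h3
    simp [hc0] at h3
  have hμinv : μ⁻¹ < 0 := inv_lt_zero.mpr hμneg
  have hμne : μ ≠ 0 := hμneg.ne
  set lam : Finset (Fin K) → Fin K → ℝ := fun S k => c (S, k) / μ with hlam
  have hlam_nonneg : ∀ S ∈ I, ∀ k ∈ S, 0 ≤ lam S k := by
    intro S hS k hk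
    simp only [hlam]
    rw [div_eq_mul_inv]
    nlinarith [hc_act (S, k) hS hk, inv_nonpos.mpr hμneg.le]
  have hlagsum : ∀ te, (∑ S ∈ I, ∑ k ∈ S, lam S k * g S k te)
      = (∑ p ∈ Finset.univ.filter
        (fun p : Finset (Fin K) × Fin K => p.1 ∈ I ∧ p.2 ∈ p.1),
          g p.1 p.2 te * c p) * μ⁻¹ := by
    intro te
    have hprod := Finset.sum_finset_product (Finset.univ.filter
      (fun p : Finset (Fin K) × Fin K => p.1 ∈ I ∧ p.2 ∈ p.1)) I (fun S => S)
      (by simp) (f := fun p : Finset (Fin K) × Fin K => g p.1 p.2 te * c p * μ⁻¹)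
    rw [Finset.sum_mul, hprod]
    refine Finset.sum_congr rfl fun S hS => Finset.sum_congr rfl fun k hk => ?_
    simp only [hlam]
    rw [div_eq_mul_inv]
    ring
  have hlag : ∀ te ∈ C, pstar ≤ Etil te + ∑ S ∈ I, ∑ k ∈ S, lam S k * g S k te := by
    intro te hte
    have h2 := hkey te hte
    rw [hlagsum te]
    have haux : ∀ X E P : ℝ, X + E * μ ≤ P * μ → P ≤ E + X * μ⁻¹ := by
      intro X E P hXE
      have h3 := mul_le_mul_of_nonpos_right hXE hμinv.le
      have e1 : P * μ * μ⁻¹ = P := by field_simp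
      have e2 : (X + E * μ) * μ⁻¹ = X * μ⁻¹ + E := by field_simp
      linarith [h3, e1, e2]
    exact haux _ _ _ h2
  have hDualle : ∀ lam' : Finset (Fin K) → Fin K → ℝ,
      (∀ S ∈ I, ∀ k ∈ S, 0 ≤ lam' S k) → Dual lam' ≤ pstar := by
    intro lam' hlam'
    rw [hDual]
    by_cases hbdd : BddBelow
      ((fun te => Etil te + ∑ S ∈ I, ∑ k ∈ S, lam' S k * g S k te) '' C)
    · refine le_csInf hSp_ne ?_
      rintro v ⟨te, hte, hfeas, rfl⟩
      refine le_trans (csInf_le hbdd ⟨te, hte, rfl⟩) ?_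
      have hsnp : (∑ S ∈ I, ∑ k ∈ S, lam' S k * g S k te) ≤ 0 :=
        Finset.sum_nonpos fun S hS => Finset.sum_nonpos fun k hk =>
          mul_nonpos_of_nonneg_of_nonpos (hlam' S hS k hk) (hfeas S hS k hk)
      show Etil te + (∑ S ∈ I, ∑ k ∈ S, lam' S k * g S k te) ≤ Etil te
      linarith
    · rw [Real.sInf_of_not_bddBelow hbdd]
      exact hpstar_nonneg
  have hDualge : pstar ≤ Dual lam := by
    rw [hDual]
    refine le_csInf ⟨_, ⟨te0, hte0C, rfl⟩⟩ ?_
    rintro b ⟨te, hte, rfl⟩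
    exact hlag te hte
  have hDlam : Dual lam = pstar := le_antisymm (hDualle lam hlam_nonneg) hDualge
  apply le_antisymm
  · refine csSup_le ⟨Dual lam, lam, hlam_nonneg, rfl⟩ ?_
    rintro d ⟨lam', hlam', rfl⟩
    exact hDualle lam' hlam'
  · refine le_csSup ⟨pstar, ?_⟩ ⟨lam, hlam_nonneg, hDlam.symm⟩
    rintro d ⟨lam', hlam', rfl⟩
    exact hDualle lam' hlam'
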